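/- Let f(μ, t) = (1/|S|)Σ_{w∈S}(1/2)(‖i_w − μ‖² + d t) + (|S|/(2σ_P² λ))‖μ − ō‖² + (|S| d/(2λ))(ln(σ_P²/t) + t/σ_P²), where ō = (1/|S|)Σ_{w∈S} o_w. This is the expected objective after applying the Gaussian expectation E_{h~N(μ,tI)}[(1/2)‖i_w − h‖²] = (1/2)‖i_w − μ‖² + (d/2)t. Then f is jointly minimized over ℝ^d × (0,∞) at μ* = (1/((1+α)|S|)) Σ_{w∈S}(i_w + α o_w) with α = |S|/(σ_P² λ), and t* satisfying 1/2 + (|S|/(2λ))(−1/t* + 1/σ_P²) = 0, i.e., t* = (|S| σ_P²)/(|S| + λ σ_P²). -/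

import Mathlib

open Finset

set_option maxHeartbeats 1000000 in
/-- The expected objective
`f(μ,t) = (1/|S|)Σ_{w∈S}(1/2)(‖i_w − μ‖² + d t) + (|S|/(2σ_P²λ))‖μ − ō‖² +
(|S|d/(2λ))(ln(σ_P²/t) + t/σ_P²)` is jointly uniquely minimized over `ℝ^d × (0,∞)` at
`μ* = (1/((1+α)|S|)) Σ_{w∈S}(i_w + α o_w)` with `α = |S|/(σ_P² λ)`, and at `t*` satisfying
`1/2 + (|S|/(2λ))(−1/t* + 1/σ_P²) = 0`, i.e. `t* = |S|σ_P²/(|S| + λσ_P²)`. -/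
theorem stmt_17 {ι : Type*} (d : ℕ) (hd : 1 ≤ d) (S : Finset ι) (hS : S.Nonempty)
    (i o : ι → EuclideanSpace ℝ (Fin d)) (σP2 lam : ℝ) (hP : 0 < σP2) (hl : 0 < lam) :
    let obar : EuclideanSpace ℝ (Fin d) := (1 / (S.card : ℝ)) • ∑ w ∈ S, o w
    let f : EuclideanSpace ℝ (Fin d) → ℝ → ℝ := fun μ t =>
      (1 / (S.card : ℝ)) * ∑ w ∈ S, (1 / 2 : ℝ) * (‖i w - μ‖ ^ 2 + (d : ℝ) * t) +
        ((S.card : ℝ) / (2 * σP2 * lam)) * ‖μ - obar‖ ^ 2 +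
        ((S.card : ℝ) * (d : ℝ) / (2 * lam)) * (Real.log (σP2 / t) + t / σP2)
    let α : ℝ := (S.card : ℝ) / (σP2 * lam)
    let μstar : EuclideanSpace ℝ (Fin d) :=
      (1 / ((1 + α) * (S.card : ℝ))) • ∑ w ∈ S, (i w + α • o w)
    let tstar : ℝ := (S.card : ℝ) * σP2 / ((S.card : ℝ) + lam * σP2)
    (1 / 2 + ((S.card : ℝ) / (2 * lam)) * (-1 / tstar + 1 / σP2) = 0) ∧
      ∀ (μ : EuclideanSpace ℝ (Fin d)) (t : ℝ), 0 < t →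
        f μstar tstar ≤ f μ t ∧ (f μ t = f μstar tstar → μ = μstar ∧ t = tstar) := by
  intro obar f α μstar tstar
  have hn : (0:ℝ) < (S.card : ℝ) := by exact_mod_cast Finset.card_pos.mpr hS
  set n : ℝ := (S.card : ℝ) with hn'
  have hα : 0 < α := div_pos hn (mul_pos hP hl)
  have h1α : (0:ℝ) < 1 + α := by linarith
  have hts : 0 < tstar := by
    have : (0:ℝ) < n + lam * σP2 := by positivity
    exact div_pos (by positivity) this
  have hd' : (0:ℝ) < (d:ℝ) := by exact_mod_cast hd
  have hstat : 1 / 2 + (n / (2 * lam)) * (-1 / tstar + 1 / σP2) = 0 := by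
    have h2 : (0:ℝ) < n + lam * σP2 := by positivity
    simp only [tstar]
    field_simp
    ring
  refine ⟨hstat, ?_⟩
  intro μ t ht
  -- split f into parts
  have hsplit : ∀ (ν : EuclideanSpace ℝ (Fin d)) (s : ℝ), f ν s =
      (1 / (2*n)) * ∑ w ∈ S, ‖i w - ν‖ ^ 2 + (n / (2 * σP2 * lam)) * ‖ν - obar‖ ^ 2
      + ((d:ℝ)/2) * s + (n * d / (2*lam)) * (Real.log (σP2 / s) + s / σP2) := by
    intro ν s
    simp only [f]
    rw [Finset.sum_congr rfl (fun w _ => by ring :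
      ∀ w ∈ S, (1/2 : ℝ) * (‖i w - ν‖^2 + (d:ℝ)*s) = (1/2) * ‖i w - ν‖^2 + (1/2)*((d:ℝ)*s)),
      Finset.sum_add_distrib, Finset.sum_const, nsmul_eq_mul, ← Finset.mul_sum]
    rw [← hn']
    field_simp
    ring
  -- expand sum of squared norms
  have expand : ∀ (ν : EuclideanSpace ℝ (Fin d)), ∑ w ∈ S, ‖i w - ν‖ ^ 2
      = ∑ w ∈ S, ‖i w‖ ^ 2 - 2 * inner ℝ (∑ w ∈ S, i w) ν + n * ‖ν‖ ^ 2 := by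
    intro ν
    calc ∑ w ∈ S, ‖i w - ν‖ ^ 2 = ∑ w ∈ S, (‖i w‖^2 - 2 * inner ℝ (i w) ν + ‖ν‖^2) :=
          Finset.sum_congr rfl fun w _ => norm_sub_sq_real _ _
      _ = _ := by
          rw [Finset.sum_add_distrib, Finset.sum_sub_distrib, ← Finset.mul_sum, ← sum_inner,
            Finset.sum_const, nsmul_eq_mul]
  -- μ-part identity
  have keyμ : (1 / (2*n)) * ∑ w ∈ S, ‖i w - μ‖ ^ 2 + (n / (2 * σP2 * lam)) * ‖μ - obar‖ ^ 2
      = (1 / (2*n)) * ∑ w ∈ S, ‖i w - μstar‖ ^ 2 + (n / (2 * σP2 * lam)) * ‖μstar - obar‖ ^ 2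
        + ((1+α)/2) * ‖μ - μstar‖ ^ 2 := by
    rw [expand μ, expand μstar, norm_sub_sq_real μ obar, norm_sub_sq_real μstar obar,
      norm_sub_sq_real μ μstar]
    have hαval : α = n / (σP2 * lam) := rfl
    have hsum : ∑ w ∈ S, (i w + α • o w) = (∑ w ∈ S, i w) + α • ∑ w ∈ S, o w := by
      rw [Finset.sum_add_distrib, Finset.smul_sum]
    simp only [μstar, obar, hsum, ← hn']
    set I := ∑ w ∈ S, i w with hI
    set O := ∑ w ∈ S, o w with hO
    simp only [← real_inner_self_eq_norm_sq]
    simp only [real_inner_smul_left, real_inner_smul_right, inner_add_left, inner_add_right]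
    rw [real_inner_comm O I]
    rw [real_inner_comm I μ]
    set K := ∑ x ∈ S, (inner ℝ (i x) (i x) : ℝ) with hK
    set p := (inner ℝ μ I : ℝ) with hp
    set q := (inner ℝ μ O : ℝ) with hq
    set u := (inner ℝ I I : ℝ) with hu
    set v := (inner ℝ O I : ℝ) with hv
    set z := (inner ℝ O O : ℝ) with hz
    set m := (inner ℝ μ μ : ℝ) with hm
    rw [hαval]
    have hne1 : σP2 * lam + n ≠ 0 := by positivity
    have hne2 : n ≠ 0 := ne_of_gt hn
    have hne3 : σP2 ≠ 0 := ne_of_gt hP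
    have hne4 : lam ≠ 0 := ne_of_gt hl
    field_simp
    ring
  -- t-part identity
  have keyt : ((d:ℝ)/2) * t + (n * d / (2*lam)) * (Real.log (σP2 / t) + t / σP2)
      = ((d:ℝ)/2) * tstar + (n * d / (2*lam)) * (Real.log (σP2 / tstar) + tstar / σP2)
        + (n * d / (2*lam)) * (t/tstar - 1 - Real.log (t/tstar)) := by
    rw [Real.log_div (ne_of_gt hP) (ne_of_gt ht), Real.log_div (ne_of_gt hP) (ne_of_gt hts),
      Real.log_div (ne_of_gt ht) (ne_of_gt hts)]
    have h2 : (0:ℝ) < n + lam * σP2 := by positivity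
    simp only [tstar]
    field_simp
    ring
  have key : f μ t = f μstar tstar + ((1+α)/2) * ‖μ - μstar‖ ^ 2
      + (n * d / (2*lam)) * (t/tstar - 1 - Real.log (t/tstar)) := by
    rw [hsplit μ t, hsplit μstar tstar, keyμ]
    linarith [keyt]
  have hlog : Real.log (t/tstar) ≤ t/tstar - 1 := Real.log_le_sub_one_of_pos (div_pos ht hts)
  have hA : 0 ≤ ((1+α)/2) * ‖μ - μstar‖ ^ 2 := by positivity
  have hB : 0 ≤ (n * d / (2*lam)) * (t/tstar - 1 - Real.log (t/tstar)) := by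
    have h0 : 0 ≤ t/tstar - 1 - Real.log (t/tstar) := by linarith
    exact mul_nonneg (by positivity) h0
  constructor
  · rw [key]; linarith
  · intro heq
    rw [key] at heq
    have hA0 : ((1+α)/2) * ‖μ - μstar‖ ^ 2 = 0 := by linarith
    have hB0 : (n * d / (2*lam)) * (t/tstar - 1 - Real.log (t/tstar)) = 0 := by linarith
    constructor
    · have : ‖μ - μstar‖ ^ 2 = 0 := by
        have h12 : ((1+α)/2) ≠ 0 := by positivity
        exact (mul_eq_zero.mp hA0).resolve_left h12
      have : μ - μstar = 0 := by
        rwa [pow_eq_zero_iff (by norm_num), norm_eq_zero] at this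
      exact sub_eq_zero.mp this
    · by_contra hne
      have hne' : t / tstar ≠ 1 := by
        intro h1
        exact hne ((div_eq_one_iff_eq (ne_of_gt hts)).mp h1)
      have := Real.log_lt_sub_one_of_pos (div_pos ht hts) hne'
      have hc : 0 < (n * d / (2*lam)) * (t/tstar - 1 - Real.log (t/tstar)) := by
        have h0 : 0 < t/tstar - 1 - Real.log (t/tstar) := by linarith
        exact mul_pos (by positivity) h0
      linarith
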